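/- Let G be a graph that is P̂₄-free and contains no K₄ as a subgraph. Suppose a, b, x₁, x₂ are four distinct vertices such that {a,b,x₁} and {a,b,x₂} are both triangles of G. Then every triangle of G containing both a and x₁ is equal to {a,b,x₁}, i.e., if {a,x₁,y} is a triangle of G then y = b. -/
import Mathlib


/-- `H` is contained in `G` as a (not necessarily induced) subgraph:
there is an injective map of vertices carrying edges of `H` to edges of `G`. -/
def Contains {α β : Type*} (H : SimpleGraph α) (G : SimpleGraph β) : Prop :=
  ∃ f : α → β, Function.Injective f ∧ ∀ ⦃a b⦄, H.Adj a b → G.Adj (f a) (f b)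

/-- The suspension `P̂₄` of the path on 4 vertices: a new apex vertex `none`
is joined to all four vertices of `P₄`. -/
def hatP4 : SimpleGraph (Option (Fin 4)) :=
  SimpleGraph.fromRel (fun a b =>
    (∃ i j, a = some i ∧ b = some j ∧ (SimpleGraph.pathGraph 4).Adj i j) ∨ a = none)

/-- The number of triangles (3-cliques) of a graph. -/
noncomputable def triangleCount {V : Type*} (G : SimpleGraph V) : ℕ :=
  (G.cliqueSet 3).ncard

/-- In a `P̂₄`-free, `K₄`-free graph, if `{a,b,x₁}` and `{a,b,x₂}` are triangles
with `a, b, x₁, x₂` distinct, then the only triangle through the edge `a x₁`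
is `{a,b,x₁}`: any common neighbor `y` of `a` and `x₁` equals `b`. -/
theorem stmt_15 {V : Type} (G : SimpleGraph V)
    (hP4 : ¬ Contains hatP4 G) (hK4 : ¬ Contains (⊤ : SimpleGraph (Fin 4)) G)
    (a b x₁ x₂ : V)
    (hd : a ≠ b ∧ a ≠ x₁ ∧ a ≠ x₂ ∧ b ≠ x₁ ∧ b ≠ x₂ ∧ x₁ ≠ x₂)
    (hab : G.Adj a b) (hax₁ : G.Adj a x₁) (hbx₁ : G.Adj b x₁)
    (hax₂ : G.Adj a x₂) (hbx₂ : G.Adj b x₂) :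
    ∀ y : V, G.Adj a y → G.Adj x₁ y → y = b := by
  obtain ⟨hab', hax1', hax2', hbx1', hbx2', hx12⟩ := hd
  intro y hay hx1y
  by_contra hyb
  have hay' : a ≠ y := G.ne_of_adj hay
  have hx1y' : x₁ ≠ y := G.ne_of_adj hx1y
  by_cases hyx2 : y = x₂
  · subst hyx2
    apply hK4
    refine ⟨![a, b, x₁, y], ?_, ?_⟩
    · intro i j h
      fin_cases i <;> fin_cases j <;> simp_all
    · intro i j h
      have hab2 := hab.symm
      have h2 := hax₁.symm
      have h3 := hax₂.symm
      have h4 := hbx₁.symm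
      have h5 := hbx₂.symm
      have h6 := hx1y.symm
      fin_cases i <;> fin_cases j <;>
        simp_all [SimpleGraph.top_adj]
  · apply hP4
    have hx2y : x₂ ≠ y := fun h => hyx2 h.symm
    refine ⟨fun o => o.elim a ![x₂, b, x₁, y], ?_, ?_⟩
    · intro u v h
      match u, v with
      | none, none => rfl
      | none, some j => fin_cases j <;> simp_all
      | some i, none => fin_cases i <;> simp_all
      | some i, some j =>
        fin_cases i <;> fin_cases j <;> simp_all
    · intro u v h
      have := hab.symm; have := hax₁.symm; have := hax₂.symm
      have := hbx₁.symm; have := hbx₂.symm; have := hay.symm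
      have := hx1y.symm
      rw [hatP4, SimpleGraph.fromRel_adj] at h
      obtain ⟨hne, h | h⟩ := h
      · rcases h with ⟨i, j, rfl, rfl, hij⟩ | rfl
        · rw [SimpleGraph.pathGraph_adj] at hij
          fin_cases i <;> fin_cases j <;> simp_all
        · match v with
          | none => exact absurd rfl hne
          | some j => fin_cases j <;> simp_all
      · rcases h with ⟨i, j, rfl, rfl, hij⟩ | rfl
        · rw [SimpleGraph.pathGraph_adj] at hij
          fin_cases i <;> fin_cases j <;> simp_all
        · match u with
          | none => exact absurd rfl hne
          | some j => fin_cases j <;> simp_all
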